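/- Let n, l, m be even integers greater than 1 and let R ∈ ℝ^{(n·l)×(n·m)} be an arbitrary matrix. Define Z* = (1/(2n)) · Σ_{k=0}^{n−1} (Ω_n^k ⊗ I_l)ᵀ · (R + J_{n·l}·R·J_{n·m}) · (Ω_n^k ⊗ I_m). Then Z* is simultaneously block-circulant of order n with l×m blocks and centrosymmetric (Z*·J_{n·m} = J_{n·l}·Z*), and Z* minimizes the Frobenius-norm distance to R over all matrices with both properties: for every Z ∈ ℝ^{(n·l)×(n·m)} that is block-circulant of order n and centrosymmetric, ‖Z* − R‖_F ≤ ‖Z − R‖_F. -/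

import Mathlib

open Matrix Kronecker
open scoped Fin.CommRing

/-- The cyclic shift permutation matrix `Ω_n` with `(Ω_n)_{i,j} = 1` iff `j ≡ i+1 (mod n)`. -/
def cyclicShift (n : ℕ) : Matrix (Fin n) (Fin n) ℝ :=
  Matrix.of fun i j => if (j : ℕ) = ((i : ℕ) + 1) % n then 1 else 0

/-- The exchange matrix `J_n` with ones on the anti-diagonal and zeros elsewhere. -/
def exchMatrix (n : ℕ) : Matrix (Fin n) (Fin n) ℝ :=
  Matrix.of fun i j => if (i : ℕ) + (j : ℕ) = n - 1 then 1 else 0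

/-- A block matrix is block-circulant of order `n` with `p × m` blocks if
`B = Σ_{k=0}^{n−1} Ω_n^k ⊗ b_k` for some blocks `b_k`. -/
def IsBlockCirculant {n p m : ℕ} (B : Matrix (Fin n × Fin p) (Fin n × Fin m) ℝ) : Prop :=
  ∃ b : Fin n → Matrix (Fin p) (Fin m) ℝ,
    B = ∑ k : Fin n, (cyclicShift n ^ (k : ℕ)) ⊗ₖ b k

/-- **Optimal block-circulant and centrosymmetric approximation.** For an arbitrary matrix
`R`, the matrix `Z* = (1/(2n))·Σ_k (Ω_n^k ⊗ I_l)ᵀ·(R + J_{nl}·R·J_{nm})·(Ω_n^k ⊗ I_m)`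
(with `J_{nl} = J_n ⊗ J_l`) is simultaneously block-circulant and centrosymmetric, and it
minimizes the Frobenius-norm distance to `R` over all matrices with both properties. -/
lemma rev_eq {n : ℕ} (i : Fin (n+1)) : Fin.rev i = -1 - i := by
  rw [← Fin.last_sub]
  congr 1
  exact eq_neg_of_add_eq_zero_left (Fin.last_add_one n)

lemma rev_add {n : ℕ} [NeZero n] (i k : Fin n) : Fin.rev (i + k) = Fin.rev i - k := by
  obtain ⟨n', rfl⟩ := Nat.exists_eq_succ_of_ne_zero (NeZero.ne n)
  rw [rev_eq, rev_eq]; ring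

lemma cyclicShift_apply {n : ℕ} [NeZero n] (i j : Fin n) :
    cyclicShift n i j = if j = i + 1 then 1 else 0 := by
  have : ((i + 1 : Fin n) : ℕ) = ((i : ℕ) + 1) % n := by
    rw [Fin.val_add, Fin.val_one', Nat.add_mod_mod]
  simp only [cyclicShift, Matrix.of_apply, Fin.ext_iff, this]

lemma exch_apply {n : ℕ} (i j : Fin n) :
    exchMatrix n i j = if j = Fin.rev i then 1 else 0 := by
  simp only [exchMatrix, Matrix.of_apply, Fin.ext_iff, Fin.val_rev]
  congr 1
  have := i.isLt; have := j.isLt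
  simp only [eq_iff_iff]
  omega

lemma cyclicShift_pow_apply {n : ℕ} [NeZero n] (k : ℕ) (i j : Fin n) :
    (cyclicShift n ^ k) i j = if j = i + (k : Fin n) then 1 else 0 := by
  induction k generalizing i j with
  | zero => simp [Matrix.one_apply, eq_comm]
  | succ k ih =>
      rw [pow_succ, Matrix.mul_apply]
      have : ∀ x : Fin n, (cyclicShift n ^ k) i x * cyclicShift n x j
          = if x = i + (k : Fin n) then (if j = x + 1 then (1:ℝ) else 0) else 0 := by
        intro x
        rw [ih, cyclicShift_apply, ite_mul, one_mul, zero_mul]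
      simp_rw [this, Finset.sum_ite_eq' Finset.univ]
      simp [add_assoc]

/-- helper: multiply on the left by an indicator matrix -/
lemma mul_left_ind {α β γ : Type*} [Fintype β] [DecidableEq β]
    (J : Matrix α β ℝ) (X : Matrix β γ ℝ) (f : α → β)
    (hJ : ∀ i x, J i x = if x = f i then 1 else 0) (i : α) (j : γ) :
    (J * X) i j = X (f i) j := by
  rw [Matrix.mul_apply]
  simp_rw [hJ, ite_mul, one_mul, zero_mul, Finset.sum_ite_eq' Finset.univ, Finset.mem_univ,
    if_true]

/-- helper: multiply on the right by an indicator matrix -/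
lemma mul_right_ind {α β γ : Type*} [Fintype β] [DecidableEq β]
    (X : Matrix α β ℝ) (J : Matrix β γ ℝ) (f : γ → β)
    (hJ : ∀ y j, J y j = if y = f j then 1 else 0) (i : α) (j : γ) :
    (X * J) i j = X i (f j) := by
  rw [Matrix.mul_apply]
  simp_rw [hJ, mul_ite, mul_one, mul_zero, Finset.sum_ite_eq' Finset.univ, Finset.mem_univ,
    if_true]

section main
set_option linter.unusedSectionVars false
variable {n l m : ℕ} [NeZero n]

lemma kronA_transpose_ind (k : Fin n) (i x : Fin n × Fin l) :
    ((cyclicShift n ^ (k : ℕ)) ⊗ₖ (1 : Matrix (Fin l) (Fin l) ℝ))ᵀ i x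
      = if x = (i.1 - k, i.2) then 1 else 0 := by
  obtain ⟨i1, i2⟩ := i; obtain ⟨x1, x2⟩ := x
  rw [Matrix.transpose_apply, Matrix.kronecker_apply, cyclicShift_pow_apply,
    Matrix.one_apply, Fin.cast_val_eq_self, ite_zero_mul_ite_zero]
  have h1 : (i1 = x1 + k ∧ x2 = i2) ↔ ((x1, x2) = (i1 - k, i2)) := by
    simp only [Prod.mk.injEq]
    constructor
    · rintro ⟨h, h'⟩; simp [h, h']
    · rintro ⟨h, h'⟩; simp [h, h']
  rw [if_congr h1 rfl rfl]
  simp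

lemma kronA_right_ind (k : Fin n) (y j : Fin n × Fin m) :
    ((cyclicShift n ^ (k : ℕ)) ⊗ₖ (1 : Matrix (Fin m) (Fin m) ℝ)) y j
      = if y = (j.1 - k, j.2) then 1 else 0 := by
  obtain ⟨y1, y2⟩ := y; obtain ⟨j1, j2⟩ := j
  rw [Matrix.kronecker_apply, cyclicShift_pow_apply, Matrix.one_apply,
    Fin.cast_val_eq_self, ite_zero_mul_ite_zero]
  have h1 : (j1 = y1 + k ∧ y2 = j2) ↔ ((y1, y2) = (j1 - k, j2)) := by
    simp only [Prod.mk.injEq]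
    constructor
    · rintro ⟨h, h'⟩; simp [h, h']
    · rintro ⟨h, h'⟩; simp [h, h']
  rw [if_congr h1 rfl rfl]
  simp

lemma kronJ_left_ind (i x : Fin n × Fin l) :
    (exchMatrix n ⊗ₖ exchMatrix l) i x = if x = (Fin.rev i.1, Fin.rev i.2) then 1 else 0 := by
  obtain ⟨i1, i2⟩ := i; obtain ⟨x1, x2⟩ := x
  rw [Matrix.kronecker_apply, exch_apply, exch_apply, ite_zero_mul_ite_zero]
  simp [Prod.ext_iff]

lemma kronJ_right_ind (y j : Fin n × Fin m) :
    (exchMatrix n ⊗ₖ exchMatrix m) y j = if y = (Fin.rev j.1, Fin.rev j.2) then 1 else 0 := by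
  obtain ⟨y1, y2⟩ := y; obtain ⟨j1, j2⟩ := j
  rw [Matrix.kronecker_apply, exch_apply, exch_apply, ite_zero_mul_ite_zero]
  simp only [Prod.mk.injEq, one_mul, eq_comm (a := j1), eq_comm (a := j2), Fin.rev_eq_iff]

lemma Zstar_apply (R : Matrix (Fin n × Fin l) (Fin n × Fin m) ℝ)
    (i : Fin n × Fin l) (j : Fin n × Fin m) :
    ((2 * (n : ℝ))⁻¹ • ∑ k : Fin n,
      ((cyclicShift n ^ (k : ℕ)) ⊗ₖ (1 : Matrix (Fin l) (Fin l) ℝ))ᵀ *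
        (R + (exchMatrix n ⊗ₖ exchMatrix l) * R * (exchMatrix n ⊗ₖ exchMatrix m)) *
        ((cyclicShift n ^ (k : ℕ)) ⊗ₖ (1 : Matrix (Fin m) (Fin m) ℝ))) i j
    = (2 * (n : ℝ))⁻¹ * ∑ k : Fin n,
        (R (i.1 - k, i.2) (j.1 - k, j.2)
          + R (Fin.rev (i.1 - k), Fin.rev i.2) (Fin.rev (j.1 - k), Fin.rev j.2)) := by
  rw [Matrix.smul_apply, Matrix.sum_apply, smul_eq_mul]
  congr 1
  refine Finset.sum_congr rfl fun k _ => ?_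
  rw [mul_right_ind _ _ (fun j => (j.1 - k, j.2)) (kronA_right_ind k),
    mul_left_ind _ _ (fun i => (i.1 - k, i.2)) (kronA_transpose_ind k),
    Matrix.add_apply,
    mul_right_ind _ _ (fun j => (Fin.rev j.1, Fin.rev j.2)) kronJ_right_ind,
    mul_left_ind _ _ (fun i => (Fin.rev i.1, Fin.rev i.2)) kronJ_left_ind]

end main

theorem blockCirculant_centrosymmetric_approximation
    (n l m : ℕ) (hn : 1 < n) (hl : 1 < l) (hm : 1 < m)
    (hneven : Even n) (hleven : Even l) (hmeven : Even m)
    (R : Matrix (Fin n × Fin l) (Fin n × Fin m) ℝ)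
    (Zstar : Matrix (Fin n × Fin l) (Fin n × Fin m) ℝ)
    (hZstar : Zstar = (2 * (n : ℝ))⁻¹ • ∑ k : Fin n,
      ((cyclicShift n ^ (k : ℕ)) ⊗ₖ (1 : Matrix (Fin l) (Fin l) ℝ))ᵀ *
        (R + (exchMatrix n ⊗ₖ exchMatrix l) * R * (exchMatrix n ⊗ₖ exchMatrix m)) *
        ((cyclicShift n ^ (k : ℕ)) ⊗ₖ (1 : Matrix (Fin m) (Fin m) ℝ))) :
    IsBlockCirculant Zstar ∧
    Zstar * (exchMatrix n ⊗ₖ exchMatrix m) = (exchMatrix n ⊗ₖ exchMatrix l) * Zstar ∧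
    ∀ Z : Matrix (Fin n × Fin l) (Fin n × Fin m) ℝ,
      IsBlockCirculant Z →
      Z * (exchMatrix n ⊗ₖ exchMatrix m) = (exchMatrix n ⊗ₖ exchMatrix l) * Z →
      Real.sqrt (∑ i, ∑ j, (Zstar - R) i j ^ 2) ≤ Real.sqrt (∑ i, ∑ j, (Z - R) i j ^ 2) := by
  haveI : NeZero n := ⟨by omega⟩
  -- entrywise formula for Zstar
  have key : ∀ (p : Fin n × Fin l) (q : Fin n × Fin m),
      Zstar p q = (2 * (n : ℝ))⁻¹ * ∑ k : Fin n,
        (R (p.1 - k, p.2) (q.1 - k, q.2)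
          + R (Fin.rev (p.1 - k), Fin.rev p.2) (Fin.rev (q.1 - k), Fin.rev q.2)) := by
    intro p q; rw [hZstar]; exact Zstar_apply R p q
  -- shift invariance of Zstar
  have hshift : ∀ (t : Fin n) (p : Fin n × Fin l) (q : Fin n × Fin m),
      Zstar (p.1 + t, p.2) (q.1 + t, q.2) = Zstar p q := by
    intro t p q
    rw [key, key]
    congr 1
    rw [← Equiv.sum_comp (Equiv.addRight t)
      (fun k => R (p.1 + t - k, p.2) (q.1 + t - k, q.2)
        + R (Fin.rev (p.1 + t - k), Fin.rev p.2) (Fin.rev (q.1 + t - k), Fin.rev q.2))]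
    refine Finset.sum_congr rfl fun k _ => ?_
    simp [add_sub_add_right_eq_sub]
  -- centro invariance of Zstar
  have hcent : ∀ (p : Fin n × Fin l) (q : Fin n × Fin m),
      Zstar (Fin.rev p.1, Fin.rev p.2) (Fin.rev q.1, Fin.rev q.2) = Zstar p q := by
    intro p q
    rw [key, key]
    congr 1
    rw [← Equiv.sum_comp (Equiv.neg (Fin n))
      (fun k => R (Fin.rev p.1 - k, Fin.rev p.2) (Fin.rev q.1 - k, Fin.rev q.2)
        + R (Fin.rev (Fin.rev p.1 - k), Fin.rev (Fin.rev p.2))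
            (Fin.rev (Fin.rev q.1 - k), Fin.rev (Fin.rev q.2)))]
    refine Finset.sum_congr rfl fun k _ => ?_
    have h1 : ∀ x : Fin n, Fin.rev x - -k = Fin.rev (x - k) := by
      intro x
      have := rev_add (x - k) k
      rw [sub_add_cancel] at this
      rw [this]; ring
    simp only [Equiv.neg_apply, h1, Fin.rev_rev]
    ring
  -- entry formula for block-circulant sums
  have bc_entry : ∀ (c : Fin n → Matrix (Fin l) (Fin m) ℝ) (p : Fin n × Fin l)
      (q : Fin n × Fin m),
      (∑ t : Fin n, (cyclicShift n ^ (t : ℕ)) ⊗ₖ c t) p q = c (q.1 - p.1) p.2 q.2 := by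
    intro c p q
    rw [Matrix.sum_apply]
    have hpt : ∀ t : Fin n, ((cyclicShift n ^ (t : ℕ)) ⊗ₖ c t) p q
        = if t = q.1 - p.1 then c t p.2 q.2 else 0 := by
      intro t
      rw [Matrix.kronecker_apply, cyclicShift_pow_apply, Fin.cast_val_eq_self, ite_mul,
        one_mul, zero_mul]
      congr 1
      simp only [eq_iff_iff]
      constructor
      · intro h; simp [h, add_comm]
      · intro h; simp [h, add_comm]
    simp_rw [hpt, Finset.sum_ite_eq' Finset.univ, Finset.mem_univ, if_true]
  refine ⟨?_, ?_, ?_⟩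
  · refine ⟨fun k => Matrix.of fun a b => Zstar (0, a) (k, b), ?_⟩
    ext p q
    rw [bc_entry]
    have h := hshift p.1 (0, p.2) (q.1 - p.1, q.2)
    simp only [zero_add, sub_add_cancel] at h
    exact h
  · ext p q
    rw [mul_right_ind _ _ (fun q => (Fin.rev q.1, Fin.rev q.2)) kronJ_right_ind,
      mul_left_ind _ _ (fun p => (Fin.rev p.1, Fin.rev p.2)) kronJ_left_ind]
    have h := hcent p (Fin.rev q.1, Fin.rev q.2)
    simp only [Fin.rev_rev] at h
    exact h.symm
  · intro Z hbc hcomm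
    obtain ⟨c, hc⟩ := hbc
    have hZ_entry : ∀ p q, Z p q = c (q.1 - p.1) p.2 q.2 := by
      intro p q; rw [hc]; exact bc_entry c p q
    have hZshift : ∀ (t : Fin n) (p : Fin n × Fin l) (q : Fin n × Fin m),
        Z (p.1 + t, p.2) (q.1 + t, q.2) = Z p q := by
      intro t p q; rw [hZ_entry, hZ_entry]
      simp [add_sub_add_right_eq_sub]
    have hZcent : ∀ (p : Fin n × Fin l) (q : Fin n × Fin m),
        Z (Fin.rev p.1, Fin.rev p.2) (Fin.rev q.1, Fin.rev q.2) = Z p q := by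
      intro p q
      have h := congrFun (congrFun hcomm p) (Fin.rev q.1, Fin.rev q.2)
      rw [mul_right_ind _ _ (fun q => (Fin.rev q.1, Fin.rev q.2)) kronJ_right_ind,
        mul_left_ind _ _ (fun p => (Fin.rev p.1, Fin.rev p.2)) kronJ_left_ind] at h
      simp only [Fin.rev_rev] at h
      exact h.symm
    set D : Matrix (Fin n × Fin l) (Fin n × Fin m) ℝ := Z - Zstar with hD
    have hDshift : ∀ (t : Fin n) (p : Fin n × Fin l) (q : Fin n × Fin m),
        D (p.1 + t, p.2) (q.1 + t, q.2) = D p q := by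
      intro t p q; simp only [hD, Matrix.sub_apply, hZshift, hshift]
    have hDcent : ∀ (p : Fin n × Fin l) (q : Fin n × Fin m),
        D (Fin.rev p.1, Fin.rev p.2) (Fin.rev q.1, Fin.rev q.2) = D p q := by
      intro p q; simp only [hD, Matrix.sub_apply, hZcent, hcent]
    -- two reindexing identities
    have hU1 : ∀ k : Fin n,
        (∑ p : Fin n × Fin l, ∑ q : Fin n × Fin m,
          D p q * R (p.1 - k, p.2) (q.1 - k, q.2))
        = ∑ p : Fin n × Fin l, ∑ q : Fin n × Fin m, D p q * R p q := by
      intro k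
      rw [← Equiv.sum_comp (Equiv.prodCongr (Equiv.addRight k) (Equiv.refl (Fin l)))
        (fun p : Fin n × Fin l => ∑ q : Fin n × Fin m,
          D p q * R (p.1 - k, p.2) (q.1 - k, q.2))]
      refine Finset.sum_congr rfl fun p _ => ?_
      obtain ⟨i, a⟩ := p
      rw [← Equiv.sum_comp (Equiv.prodCongr (Equiv.addRight k) (Equiv.refl (Fin m)))
        (fun q : Fin n × Fin m =>
          D (Equiv.prodCongr (Equiv.addRight k) (Equiv.refl (Fin l)) (i, a)) q *
            R ((Equiv.prodCongr (Equiv.addRight k) (Equiv.refl (Fin l)) (i, a)).1 - k,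
              (Equiv.prodCongr (Equiv.addRight k) (Equiv.refl (Fin l)) (i, a)).2)
              (q.1 - k, q.2))]
      refine Finset.sum_congr rfl fun q _ => ?_
      obtain ⟨j, b⟩ := q
      simp only [Equiv.prodCongr_apply, Equiv.coe_addRight, Equiv.coe_refl, Prod.map,
        id_eq, add_sub_cancel_right]
      rw [hDshift k (i, a) (j, b)]
    have hU2 : ∀ k : Fin n,
        (∑ p : Fin n × Fin l, ∑ q : Fin n × Fin m,
          D p q * R (Fin.rev (p.1 - k), Fin.rev p.2) (Fin.rev (q.1 - k), Fin.rev q.2))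
        = ∑ p : Fin n × Fin l, ∑ q : Fin n × Fin m, D p q * R p q := by
      intro k
      rw [← Equiv.sum_comp
        (Equiv.prodCongr (Fin.revPerm.trans (Equiv.addRight k)) Fin.revPerm)
        (fun p : Fin n × Fin l => ∑ q : Fin n × Fin m,
          D p q * R (Fin.rev (p.1 - k), Fin.rev p.2) (Fin.rev (q.1 - k), Fin.rev q.2))]
      refine Finset.sum_congr rfl fun p _ => ?_
      obtain ⟨i, a⟩ := p
      rw [← Equiv.sum_comp
        (Equiv.prodCongr (Fin.revPerm.trans (Equiv.addRight k)) Fin.revPerm)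
        (fun q : Fin n × Fin m =>
          D (Equiv.prodCongr (Fin.revPerm.trans (Equiv.addRight k)) Fin.revPerm (i, a)) q *
            R (Fin.rev ((Equiv.prodCongr (Fin.revPerm.trans (Equiv.addRight k))
                  Fin.revPerm (i, a)).1 - k),
                Fin.rev (Equiv.prodCongr (Fin.revPerm.trans (Equiv.addRight k))
                  Fin.revPerm (i, a)).2)
              (Fin.rev (q.1 - k), Fin.rev q.2))]
      refine Finset.sum_congr rfl fun q _ => ?_
      obtain ⟨j, b⟩ := q
      simp only [Equiv.prodCongr_apply, Equiv.trans_apply, Equiv.coe_addRight,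
        Fin.revPerm_apply, Prod.map, id_eq, add_sub_cancel_right, Fin.rev_rev]
      rw [hDshift k (Fin.rev i, Fin.rev a) (Fin.rev j, Fin.rev b),
        hDcent (i, a) (j, b)]
    -- the orthogonality relation
    have hDZstar : (∑ p : Fin n × Fin l, ∑ q : Fin n × Fin m, D p q * Zstar p q)
        = ∑ p : Fin n × Fin l, ∑ q : Fin n × Fin m, D p q * R p q := by
      have point : ∀ (p : Fin n × Fin l) (q : Fin n × Fin m),
          D p q * Zstar p q = ∑ k : Fin n, (2 * (n : ℝ))⁻¹ *
            (D p q * R (p.1 - k, p.2) (q.1 - k, q.2)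
              + D p q * R (Fin.rev (p.1 - k), Fin.rev p.2) (Fin.rev (q.1 - k), Fin.rev q.2)) := by
        intro p q
        rw [key p q, mul_left_comm, Finset.mul_sum, Finset.mul_sum]
        exact Finset.sum_congr rfl fun k _ => by rw [mul_add]
      calc (∑ p : Fin n × Fin l, ∑ q : Fin n × Fin m, D p q * Zstar p q)
          = ∑ p : Fin n × Fin l, ∑ q : Fin n × Fin m, ∑ k : Fin n, (2 * (n : ℝ))⁻¹ *
              (D p q * R (p.1 - k, p.2) (q.1 - k, q.2)
                + D p q * R (Fin.rev (p.1 - k), Fin.rev p.2)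
                    (Fin.rev (q.1 - k), Fin.rev q.2)) :=
            Finset.sum_congr rfl fun p _ => Finset.sum_congr rfl fun q _ => point p q
        _ = ∑ p : Fin n × Fin l, ∑ k : Fin n, ∑ q : Fin n × Fin m, (2 * (n : ℝ))⁻¹ *
              (D p q * R (p.1 - k, p.2) (q.1 - k, q.2)
                + D p q * R (Fin.rev (p.1 - k), Fin.rev p.2)
                    (Fin.rev (q.1 - k), Fin.rev q.2)) :=
            Finset.sum_congr rfl fun p _ => Finset.sum_comm
        _ = ∑ k : Fin n, ∑ p : Fin n × Fin l, ∑ q : Fin n × Fin m, (2 * (n : ℝ))⁻¹ *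
              (D p q * R (p.1 - k, p.2) (q.1 - k, q.2)
                + D p q * R (Fin.rev (p.1 - k), Fin.rev p.2)
                    (Fin.rev (q.1 - k), Fin.rev q.2)) := Finset.sum_comm
        _ = ∑ k : Fin n, (2 * (n : ℝ))⁻¹ *
              ((∑ p : Fin n × Fin l, ∑ q : Fin n × Fin m, D p q * R p q)
                + ∑ p : Fin n × Fin l, ∑ q : Fin n × Fin m, D p q * R p q) := by
            refine Finset.sum_congr rfl fun k _ => ?_
            simp only [← Finset.mul_sum]
            congr 1
            nth_rewrite 1 [← hU1 k]
            rw [← hU2 k]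
            rw [← Finset.sum_add_distrib]
            exact Finset.sum_congr rfl fun p _ => Finset.sum_add_distrib
        _ = ∑ p : Fin n × Fin l, ∑ q : Fin n × Fin m, D p q * R p q := by
            rw [Finset.sum_const, Finset.card_univ, Fintype.card_fin, nsmul_eq_mul]
            have hn0 : (n : ℝ) ≠ 0 := Nat.cast_ne_zero.mpr (by omega)
            field_simp
            ring
    have horth : (∑ p : Fin n × Fin l, ∑ q : Fin n × Fin m,
        D p q * (Zstar p q - R p q)) = 0 := by
      simp only [mul_sub, Finset.sum_sub_distrib, hDZstar, sub_self]
    -- Pythagoras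
    apply Real.sqrt_le_sqrt
    have pt : ∀ (p : Fin n × Fin l) (q : Fin n × Fin m),
        (Z - R) p q ^ 2
          = D p q ^ 2 + 2 * (D p q * (Zstar p q - R p q)) + (Zstar - R) p q ^ 2 := by
      intro p q
      simp only [hD, Matrix.sub_apply]
      ring
    have hsum : (∑ p : Fin n × Fin l, ∑ q : Fin n × Fin m, (Z - R) p q ^ 2)
        = (∑ p : Fin n × Fin l, ∑ q : Fin n × Fin m, D p q ^ 2)
          + 2 * (∑ p : Fin n × Fin l, ∑ q : Fin n × Fin m, D p q * (Zstar p q - R p q))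
          + ∑ p : Fin n × Fin l, ∑ q : Fin n × Fin m, (Zstar - R) p q ^ 2 := by
      calc (∑ p : Fin n × Fin l, ∑ q : Fin n × Fin m, (Z - R) p q ^ 2)
          = ∑ p : Fin n × Fin l, ∑ q : Fin n × Fin m,
              (D p q ^ 2 + 2 * (D p q * (Zstar p q - R p q)) + (Zstar - R) p q ^ 2) :=
            Finset.sum_congr rfl fun p _ => Finset.sum_congr rfl fun q _ => pt p q
        _ = _ := by
            simp only [Finset.sum_add_distrib, ← Finset.mul_sum]
    rw [hsum, horth]
    have hD2 : 0 ≤ ∑ p : Fin n × Fin l, ∑ q : Fin n × Fin m, D p q ^ 2 :=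
      Finset.sum_nonneg fun p _ => Finset.sum_nonneg fun q _ => sq_nonneg _
    linarith
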